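/- Let E be a complete normed vector space over ℝ, let D ⊆ ℝ be a dense subset, let ν be a finite Borel measure on ℝ, and let μ : D × D → E be a map such that for all p, p', q ∈ D with p < p' one has ‖μ(p', q) − μ(p, q)‖ ≤ 2 (ν((p, p')))^{1/2} and ‖μ(q, p') − μ(q, p)‖ ≤ 2 (ν((p, p')))^{1/2}, where (p, p') denotes the open interval. Then for every (p₀, q₀) ∈ ℝ² there exist elements m₊, m₋ ∈ E such that μ(p', q') converges to m₊ as (p', q') → (p₀, q₀) with p', q' ∈ D, p' > p₀, q' > q₀, and μ(p', q') converges to m₋ as (p', q') → (p₀, q₀) with p', q' ∈ D, p' < p₀, q' < q₀. -/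

import Mathlib

open MeasureTheory Filter Topology ENNReal

/-- The measure of a small one-sided interval shrinking to a point tends to 0. -/
lemma small_interval (ν : Measure ℝ) [IsFiniteMeasure ν] (a : ℝ) (f : ℝ → Set ℝ)
    (hf : ∀ η, 0 < η → f η ⊆ Set.Ioo (a - η) (a + η)) (hav : ∀ η, 0 < η → a ∉ f η)
    (hmono : ∀ η η', 0 < η → η ≤ η' → f η ⊆ f η') (hmeas : ∀ η, NullMeasurableSet (f η) ν)
    {ε : ℝ} (hε : 0 < ε) :
    ∃ η : ℝ, 0 < η ∧ (ν (f η)).toReal < ε := by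
  have htend : Tendsto (fun n : ℕ => ν (f (1 / (n + 1)))) atTop
      (𝓝 (ν (⋂ n : ℕ, f (1 / (n + 1))))) :=
    tendsto_measure_iInter_atTop (fun n => hmeas _)
      (fun n m hnm => hmono _ _ (by positivity) (by
        apply one_div_le_one_div_of_le (by positivity)
        exact_mod_cast Nat.add_le_add_right hnm 1))
      ⟨0, measure_ne_top ν _⟩
  have hempty : (⋂ n : ℕ, f (1 / (n + 1))) = ∅ := by
    rw [Set.eq_empty_iff_forall_notMem]
    intro x hx
    simp only [Set.mem_iInter] at hx
    have hxa : x ≠ a := by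
      intro h
      have h0 := hx 0
      norm_num at h0
      exact hav 1 one_pos (h ▸ h0)
    obtain ⟨n, hn⟩ := exists_nat_one_div_lt (show 0 < |x - a| by
      simpa [abs_pos, sub_eq_zero] using hxa)
    obtain ⟨hl, hr⟩ := hf _ (by positivity) (hx n)
    rcases lt_or_gt_of_ne hxa with h | h
    · rw [abs_of_neg (show x - a < 0 by linarith)] at hn; linarith
    · rw [abs_of_pos (show 0 < x - a by linarith)] at hn; linarith
  rw [hempty, measure_empty] at htend
  have := htend.eventually_lt_const (show (0:ℝ≥0∞) < ENNReal.ofReal ε by simpa using hε)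
  obtain ⟨n, hn⟩ := this.exists
  exact ⟨1 / (n + 1), by positivity, ENNReal.toReal_lt_of_lt_ofReal hn⟩

theorem one_sided_limits_exist
    {E : Type*} [NormedAddCommGroup E] [NormedSpace ℝ E] [CompleteSpace E]
    (D : Set ℝ) (hD : Dense D) (ν : Measure ℝ) [IsFiniteMeasure ν]
    (μ : ℝ → ℝ → E)
    (h1 : ∀ p p' q : ℝ, p ∈ D → p' ∈ D → q ∈ D → p < p' →
      ‖μ p' q - μ p q‖ ≤ 2 * Real.sqrt (ν (Set.Ioo p p')).toReal)
    (h2 : ∀ p p' q : ℝ, p ∈ D → p' ∈ D → q ∈ D → p < p' →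
      ‖μ q p' - μ q p‖ ≤ 2 * Real.sqrt (ν (Set.Ioo p p')).toReal) :
    ∀ p₀ q₀ : ℝ, ∃ mp mm : E,
      (∀ ε : ℝ, 0 < ε → ∃ η : ℝ, 0 < η ∧ ∀ p' q' : ℝ, p' ∈ D → q' ∈ D →
        p₀ < p' → p' < p₀ + η → q₀ < q' → q' < q₀ + η → ‖μ p' q' - mp‖ < ε) ∧
      (∀ ε : ℝ, 0 < ε → ∃ η : ℝ, 0 < η ∧ ∀ p' q' : ℝ, p' ∈ D → q' ∈ D →
        p₀ - η < p' → p' < p₀ → q₀ - η < q' → q' < q₀ → ‖μ p' q' - mm‖ < ε) := by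
  intro p₀ q₀
  have mono : ∀ a b c d : ℝ, c ≤ a → b ≤ d →
      Real.sqrt (ν (Set.Ioo a b)).toReal ≤ Real.sqrt (ν (Set.Ioo c d)).toReal :=
    fun a b c d hc hd => Real.sqrt_le_sqrt
      (ENNReal.toReal_mono (measure_ne_top ν _) (measure_mono (Set.Ioo_subset_Ioo hc hd)))
  -- horizontal step estimate
  have hstep : ∀ (a b p p' q : ℝ), p ∈ D → p' ∈ D → q ∈ D → p ∈ Set.Ioo a b →
      p' ∈ Set.Ioo a b → ‖μ p q - μ p' q‖ ≤ 2 * Real.sqrt (ν (Set.Ioo a b)).toReal := by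
    intro a b p p' q hp hp' hq hpm hpm'
    rcases lt_trichotomy p p' with h | h | h
    · rw [norm_sub_rev]
      calc ‖μ p' q - μ p q‖ ≤ 2 * Real.sqrt (ν (Set.Ioo p p')).toReal := h1 _ _ _ hp hp' hq h
        _ ≤ _ := by have := mono _ _ _ _ hpm.1.le hpm'.2.le; linarith
    · simp [h]
    · calc ‖μ p q - μ p' q‖ ≤ 2 * Real.sqrt (ν (Set.Ioo p' p)).toReal := h1 _ _ _ hp' hp hq h
        _ ≤ _ := by have := mono _ _ _ _ hpm'.1.le hpm.2.le; linarith
  have vstep : ∀ (c d p q q' : ℝ), p ∈ D → q ∈ D → q' ∈ D → q ∈ Set.Ioo c d →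
      q' ∈ Set.Ioo c d → ‖μ p q - μ p q'‖ ≤ 2 * Real.sqrt (ν (Set.Ioo c d)).toReal := by
    intro c d p q q' hp hq hq' hqm hqm'
    rcases lt_trichotomy q q' with h | h | h
    · rw [norm_sub_rev]
      calc ‖μ p q' - μ p q‖ ≤ 2 * Real.sqrt (ν (Set.Ioo q q')).toReal := h2 _ _ _ hq hq' hp h
        _ ≤ _ := by have := mono _ _ _ _ hqm.1.le hqm'.2.le; linarith
    · simp [h]
    · calc ‖μ p q - μ p q'‖ ≤ 2 * Real.sqrt (ν (Set.Ioo q' q)).toReal := h2 _ _ _ hq' hq hp h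
        _ ≤ _ := by have := mono _ _ _ _ hqm'.1.le hqm.2.le; linarith
  -- combined estimate on a product window
  have est : ∀ (a b c d p q p' q' : ℝ), p ∈ D → q ∈ D → p' ∈ D → q' ∈ D →
      p ∈ Set.Ioo a b → p' ∈ Set.Ioo a b → q ∈ Set.Ioo c d → q' ∈ Set.Ioo c d →
      ‖μ p q - μ p' q'‖ ≤ 2 * Real.sqrt (ν (Set.Ioo a b)).toReal
        + 2 * Real.sqrt (ν (Set.Ioo c d)).toReal := by
    intro a b c d p q p' q' hp hq hp' hq' hpm hpm' hqm hqm'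
    calc ‖μ p q - μ p' q'‖ ≤ ‖μ p q - μ p' q‖ + ‖μ p' q - μ p' q'‖ :=
        norm_sub_le_norm_sub_add_norm_sub _ _ _
      _ ≤ _ := add_le_add (hstep a b p p' q hp hp' hq hpm hpm')
        (vstep c d p' q q' hp' hq hq' hqm hqm')
  -- smallness of one-sided windows at an arbitrary point
  have smallR : ∀ a ε : ℝ, 0 < ε → ∃ η : ℝ, 0 < η ∧
      2 * Real.sqrt (ν (Set.Ioo a (a + η))).toReal < ε := by
    intro a ε hε
    obtain ⟨η, hη, hlt⟩ := small_interval ν a (fun η => Set.Ioo a (a + η))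
      (fun η hη => Set.Ioo_subset_Ioo (by linarith) le_rfl)
      (fun η hη h => lt_irrefl _ h.1)
      (fun η η' hη h => Set.Ioo_subset_Ioo le_rfl (by linarith))
      (fun η => measurableSet_Ioo.nullMeasurableSet)
      (show (0:ℝ) < (ε / 3) ^ 2 by positivity)
    refine ⟨η, hη, ?_⟩
    have : Real.sqrt (ν (Set.Ioo a (a + η))).toReal < ε / 3 :=
      (Real.sqrt_lt' (by positivity)).2 hlt
    linarith
  have smallL : ∀ a ε : ℝ, 0 < ε → ∃ η : ℝ, 0 < η ∧
      2 * Real.sqrt (ν (Set.Ioo (a - η) a)).toReal < ε := by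
    intro a ε hε
    obtain ⟨η, hη, hlt⟩ := small_interval ν a (fun η => Set.Ioo (a - η) a)
      (fun η hη => Set.Ioo_subset_Ioo le_rfl (by linarith))
      (fun η hη h => lt_irrefl _ h.2)
      (fun η η' hη h => Set.Ioo_subset_Ioo (by linarith) le_rfl)
      (fun η => measurableSet_Ioo.nullMeasurableSet)
      (show (0:ℝ) < (ε / 3) ^ 2 by positivity)
    refine ⟨η, hη, ?_⟩
    have : Real.sqrt (ν (Set.Ioo (a - η) a)).toReal < ε / 3 :=
      (Real.sqrt_lt' (by positivity)).2 hlt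
    linarith
  -- approximating sequences
  have hseqR : ∀ a : ℝ, ∀ n : ℕ, ∃ x, x ∈ D ∧ x ∈ Set.Ioo a (a + 1 / (n + 1)) := by
    intro a n
    obtain ⟨x, hx, hxm⟩ := hD.exists_between (show a < a + 1 / (n + 1 : ℝ) by
      have : (0:ℝ) < 1 / (n + 1) := by positivity
      linarith)
    exact ⟨x, hx, hxm⟩
  have hseqL : ∀ a : ℝ, ∀ n : ℕ, ∃ x, x ∈ D ∧ x ∈ Set.Ioo (a - 1 / (n + 1)) a := by
    intro a n
    obtain ⟨x, hx, hxm⟩ := hD.exists_between (show a - 1 / (n + 1 : ℝ) < a by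
      have : (0:ℝ) < 1 / (n + 1) := by positivity
      linarith)
    exact ⟨x, hx, hxm⟩
  choose P hPD hP using hseqR p₀
  choose Q hQD hQ using hseqR q₀
  choose P' hPD' hP' using hseqL p₀
  choose Q' hQD' hQ' using hseqL q₀
  have hdiv : ∀ (N n : ℕ), N ≤ n → 1 / (n + 1 : ℝ) ≤ 1 / (N + 1 : ℝ) := by
    intro N n h
    apply one_div_le_one_div_of_le (by positivity)
    exact_mod_cast Nat.add_le_add_right h 1
  -- right Cauchy sequence
  have cauchyR : CauchySeq (fun n => μ (P n) (Q n)) := by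
    rw [Metric.cauchySeq_iff]
    intro ε hε
    obtain ⟨η₁, hη₁, hlt₁⟩ := smallR p₀ (ε / 2) (by linarith)
    obtain ⟨η₂, hη₂, hlt₂⟩ := smallR q₀ (ε / 2) (by linarith)
    obtain ⟨N, hN⟩ := exists_nat_one_div_lt (lt_min hη₁ hη₂)
    refine ⟨N, fun m hm n hn => ?_⟩
    have hwinP : ∀ k, N ≤ k → P k ∈ Set.Ioo p₀ (p₀ + η₁) := fun k hk =>
      ⟨(hP k).1, lt_of_lt_of_le (hP k).2 (by
        have h1' := hdiv N k hk
        have := lt_min_iff.1 hN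
        linarith [this.1])⟩
    have hwinQ : ∀ k, N ≤ k → Q k ∈ Set.Ioo q₀ (q₀ + η₂) := fun k hk =>
      ⟨(hQ k).1, lt_of_lt_of_le (hQ k).2 (by
        have h1' := hdiv N k hk
        have := lt_min_iff.1 hN
        linarith [this.2])⟩
    rw [dist_eq_norm]
    calc ‖μ (P m) (Q m) - μ (P n) (Q n)‖
        ≤ 2 * Real.sqrt (ν (Set.Ioo p₀ (p₀ + η₁))).toReal
          + 2 * Real.sqrt (ν (Set.Ioo q₀ (q₀ + η₂))).toReal :=
          est _ _ _ _ _ _ _ _ (hPD m) (hQD m) (hPD n) (hQD n)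
            (hwinP m hm) (hwinP n hn) (hwinQ m hm) (hwinQ n hn)
      _ < ε / 2 + ε / 2 := add_lt_add hlt₁ hlt₂
      _ = ε := by ring
  have cauchyL : CauchySeq (fun n => μ (P' n) (Q' n)) := by
    rw [Metric.cauchySeq_iff]
    intro ε hε
    obtain ⟨η₁, hη₁, hlt₁⟩ := smallL p₀ (ε / 2) (by linarith)
    obtain ⟨η₂, hη₂, hlt₂⟩ := smallL q₀ (ε / 2) (by linarith)
    obtain ⟨N, hN⟩ := exists_nat_one_div_lt (lt_min hη₁ hη₂)
    refine ⟨N, fun m hm n hn => ?_⟩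
    have hwinP : ∀ k, N ≤ k → P' k ∈ Set.Ioo (p₀ - η₁) p₀ := fun k hk =>
      ⟨lt_of_le_of_lt (by
        have h1' := hdiv N k hk
        have := lt_min_iff.1 hN
        linarith [this.1]) (hP' k).1, (hP' k).2⟩
    have hwinQ : ∀ k, N ≤ k → Q' k ∈ Set.Ioo (q₀ - η₂) q₀ := fun k hk =>
      ⟨lt_of_le_of_lt (by
        have h1' := hdiv N k hk
        have := lt_min_iff.1 hN
        linarith [this.2]) (hQ' k).1, (hQ' k).2⟩
    rw [dist_eq_norm]
    calc ‖μ (P' m) (Q' m) - μ (P' n) (Q' n)‖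
        ≤ 2 * Real.sqrt (ν (Set.Ioo (p₀ - η₁) p₀)).toReal
          + 2 * Real.sqrt (ν (Set.Ioo (q₀ - η₂) q₀)).toReal :=
          est _ _ _ _ _ _ _ _ (hPD' m) (hQD' m) (hPD' n) (hQD' n)
            (hwinP m hm) (hwinP n hn) (hwinQ m hm) (hwinQ n hn)
      _ < ε / 2 + ε / 2 := add_lt_add hlt₁ hlt₂
      _ = ε := by ring
  obtain ⟨mp, hmp⟩ := cauchySeq_tendsto_of_complete cauchyR
  obtain ⟨mm, hmm⟩ := cauchySeq_tendsto_of_complete cauchyL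
  refine ⟨mp, mm, ?_, ?_⟩
  · -- right limit
    intro ε hε
    obtain ⟨η₁, hη₁, hlt₁⟩ := smallR p₀ (ε / 4) (by linarith)
    obtain ⟨η₂, hη₂, hlt₂⟩ := smallR q₀ (ε / 4) (by linarith)
    refine ⟨min η₁ η₂, lt_min hη₁ hη₂, ?_⟩
    intro p' q' hp'D hq'D hp1 hp2 hq1 hq2
    obtain ⟨N₁, hN₁⟩ := exists_nat_one_div_lt (lt_min hη₁ hη₂)
    obtain ⟨N₂, hN₂⟩ := (Metric.tendsto_atTop.1 hmp) (ε / 2) (by linarith)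
    set n := max N₁ N₂ with hn
    have h1n := hdiv N₁ n (le_max_left _ _)
    have hmin := lt_min_iff.1 hN₁
    have hPn : P n ∈ Set.Ioo p₀ (p₀ + η₁) :=
      ⟨(hP n).1, lt_of_lt_of_le (hP n).2 (by linarith [hmin.1])⟩
    have hQn : Q n ∈ Set.Ioo q₀ (q₀ + η₂) :=
      ⟨(hQ n).1, lt_of_lt_of_le (hQ n).2 (by linarith [hmin.2])⟩
    have hp'win : p' ∈ Set.Ioo p₀ (p₀ + η₁) :=
      ⟨hp1, lt_of_lt_of_le hp2 (by linarith [min_le_left η₁ η₂])⟩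
    have hq'win : q' ∈ Set.Ioo q₀ (q₀ + η₂) :=
      ⟨hq1, lt_of_lt_of_le hq2 (by linarith [min_le_right η₁ η₂])⟩
    have hdist : ‖μ (P n) (Q n) - mp‖ < ε / 2 := by
      have := hN₂ n (le_max_right _ _)
      rwa [dist_eq_norm] at this
    calc ‖μ p' q' - mp‖ ≤ ‖μ p' q' - μ (P n) (Q n)‖ + ‖μ (P n) (Q n) - mp‖ :=
        norm_sub_le_norm_sub_add_norm_sub _ _ _
      _ < (2 * Real.sqrt (ν (Set.Ioo p₀ (p₀ + η₁))).toReal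
          + 2 * Real.sqrt (ν (Set.Ioo q₀ (q₀ + η₂))).toReal) + ε / 2 := by
          apply add_lt_add_of_le_of_lt _ hdist
          exact est _ _ _ _ _ _ _ _ hp'D hq'D (hPD n) (hQD n) hp'win hPn hq'win hQn
      _ < (ε / 4 + ε / 4) + ε / 2 := by linarith
      _ = ε := by ring
  · -- left limit
    intro ε hε
    obtain ⟨η₁, hη₁, hlt₁⟩ := smallL p₀ (ε / 4) (by linarith)
    obtain ⟨η₂, hη₂, hlt₂⟩ := smallL q₀ (ε / 4) (by linarith)
    refine ⟨min η₁ η₂, lt_min hη₁ hη₂, ?_⟩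
    intro p' q' hp'D hq'D hp1 hp2 hq1 hq2
    obtain ⟨N₁, hN₁⟩ := exists_nat_one_div_lt (lt_min hη₁ hη₂)
    obtain ⟨N₂, hN₂⟩ := (Metric.tendsto_atTop.1 hmm) (ε / 2) (by linarith)
    set n := max N₁ N₂ with hn
    have h1n := hdiv N₁ n (le_max_left _ _)
    have hmin := lt_min_iff.1 hN₁
    have hPn : P' n ∈ Set.Ioo (p₀ - η₁) p₀ :=
      ⟨lt_of_le_of_lt (by linarith [hmin.1]) (hP' n).1, (hP' n).2⟩
    have hQn : Q' n ∈ Set.Ioo (q₀ - η₂) q₀ :=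
      ⟨lt_of_le_of_lt (by linarith [hmin.2]) (hQ' n).1, (hQ' n).2⟩
    have hp'win : p' ∈ Set.Ioo (p₀ - η₁) p₀ :=
      ⟨lt_of_le_of_lt (by linarith [min_le_left η₁ η₂]) hp1, hp2⟩
    have hq'win : q' ∈ Set.Ioo (q₀ - η₂) q₀ :=
      ⟨lt_of_le_of_lt (by linarith [min_le_right η₁ η₂]) hq1, hq2⟩
    have hdist : ‖μ (P' n) (Q' n) - mm‖ < ε / 2 := by
      have := hN₂ n (le_max_right _ _)
      rwa [dist_eq_norm] at this
    calc ‖μ p' q' - mm‖ ≤ ‖μ p' q' - μ (P' n) (Q' n)‖ + ‖μ (P' n) (Q' n) - mm‖ :=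
        norm_sub_le_norm_sub_add_norm_sub _ _ _
      _ < (2 * Real.sqrt (ν (Set.Ioo (p₀ - η₁) p₀)).toReal
          + 2 * Real.sqrt (ν (Set.Ioo (q₀ - η₂) q₀)).toReal) + ε / 2 := by
          apply add_lt_add_of_le_of_lt _ hdist
          exact est _ _ _ _ _ _ _ _ hp'D hq'D (hPD' n) (hQD' n) hp'win hPn hq'win hQn
      _ < (ε / 4 + ε / 4) + ε / 2 := by linarith
      _ = ε := by ring
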